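/- In the Euclidean strong Kropina space (ℝⁿ, F) with constant unit wind W, a point q ≠ p can be joined to p by an F-geodesic starting at p if and only if ⟨q − p, W⟩ > 0. In particular if ⟨q − p, W⟩ = 0 there is no F-geodesic from p to q nor from q to p. -/

import Mathlib

lemma kropina_key {n : ℕ} (W p q : EuclideanSpace ℝ (Fin n)) (hW : ‖W‖ = 1)
    (hpq : q ≠ p) :
    (∃ a : EuclideanSpace ℝ (Fin n), ‖a‖ = 1 ∧ a ≠ -W ∧ ∃ t : ℝ, 0 < t ∧
        q = p + t • (a + W)) ↔ 0 < (inner ℝ (q - p) W : ℝ) := by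
  constructor
  · rintro ⟨a, ha, haW, t, ht, rfl⟩
    have hsum : a + W ≠ 0 := by
      intro h
      exact haW (by linear_combination (norm := module) h)
    have hsq : (0:ℝ) < ‖a + W‖ ^ 2 := pow_pos (norm_pos_iff.mpr hsum) 2
    have hexp : ‖a + W‖ ^ 2 = 2 * (1 + inner ℝ a W) := by
      rw [norm_add_sq_real, ha, hW]; ring
    have hin : 0 < 1 + (inner ℝ a W : ℝ) := by nlinarith
    have hcalc : (inner ℝ (p + t • (a + W) - p) W : ℝ) = t * (inner ℝ a W + 1) := by
      rw [add_sub_cancel_left, real_inner_smul_left, inner_add_left,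
        real_inner_self_eq_norm_sq, hW]
      ring
    rw [hcalc]
    nlinarith
  · intro hs
    set v := q - p with hv
    have hv0 : v ≠ 0 := sub_ne_zero.mpr hpq
    set s : ℝ := inner ℝ v W with hsdef
    have hvn : (0:ℝ) < ‖v‖ ^ 2 := pow_pos (norm_pos_iff.mpr hv0) 2
    set t : ℝ := ‖v‖ ^ 2 / (2 * s) with htdef
    have ht : 0 < t := div_pos hvn (by linarith)
    have h2 : ‖v‖ ^ 2 = 2 * s * t := by
      rw [htdef]; field_simp [hs.ne']
    refine ⟨(1/t) • v - W, ?_, ?_, t, ht, ?_⟩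
    · have h1 : ‖(1/t) • v - W‖ ^ 2 = (1/t)^2 * ‖v‖^2 - 2 * ((1/t) * s) + 1 := by
        rw [norm_sub_sq_real, norm_smul, real_inner_smul_left, hW, ← hsdef,
          Real.norm_eq_abs, abs_of_pos (by positivity : (0:ℝ) < 1/t)]
        ring
      have hone : ‖(1/t) • v - W‖ ^ 2 = 1 := by
        rw [h1, h2]; field_simp; ring
      nlinarith [norm_nonneg ((1/t) • v - W)]
    · intro h
      have hz : (1/t) • v = 0 := by linear_combination (norm := module) h
      rcases smul_eq_zero.mp hz with h' | h'
      · exact (one_div_ne_zero ht.ne') h'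
      · exact hv0 h'
    · have h3 : (1/t) • v - W + W = (1/t) • v := by abel
      rw [h3, smul_smul, mul_one_div, div_self ht.ne', one_smul, hv]
      abel

theorem euclidean_kropina_geodesic_connectivity {n : ℕ}
    (W p q : EuclideanSpace ℝ (Fin n)) (hW : ‖W‖ = 1) (hpq : q ≠ p) :
    ((∃ a : EuclideanSpace ℝ (Fin n), ‖a‖ = 1 ∧ a ≠ -W ∧ ∃ t : ℝ, 0 < t ∧
        q = p + t • (a + W)) ↔ 0 < (inner ℝ (q - p) W : ℝ)) ∧
    ((inner ℝ (q - p) W : ℝ) = 0 →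
      (¬ ∃ a : EuclideanSpace ℝ (Fin n), ‖a‖ = 1 ∧ a ≠ -W ∧ ∃ t : ℝ, 0 < t ∧
        q = p + t • (a + W)) ∧
      (¬ ∃ a : EuclideanSpace ℝ (Fin n), ‖a‖ = 1 ∧ a ≠ -W ∧ ∃ t : ℝ, 0 < t ∧
        p = q + t • (a + W))) := by
  refine ⟨kropina_key W p q hW hpq, fun h0 => ⟨?_, ?_⟩⟩
  · rw [kropina_key W p q hW hpq, h0]; exact lt_irrefl 0
  · rw [kropina_key W q p hW (Ne.symm hpq)]
    have : (inner ℝ (p - q) W : ℝ) = -(inner ℝ (q - p) W : ℝ) := by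
      rw [← inner_neg_left]; congr 1; abel
    rw [this, h0]; simp
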